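/- GKSL necessity (finite dimensions): let Λ : [0,∞) → End(M_n(ℂ)) be a family of completely positive linear maps with Λ(0) = id, and suppose the right derivative ℒ := lim_{t↓0} (Λ(t) − id)/t exists (in the finite-dimensional space of linear endomorphisms of M_n(ℂ)). Then there exist a completely positive linear map Ψ from M_n(ℂ) to itself and Hermitian matrices G, H ∈ M_n(ℂ) such that ℒ(ρ) = Ψ(ρ) − (Gρ + ρG) − i(Hρ − ρH) for all ρ; moreover Ψ, G, H can be chosen so that tr(H) = 0 and Ψ(X) = Σ_k A_k X A_kᴴ with tr(A_k) = 0 for every k. -/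

import Mathlib

open scoped Kronecker ComplexOrder Matrix

/-- The Choi matrix of a linear map `Λ : M_n(ℂ) → M_m(ℂ)`:
`C(Λ) = ∑ i j, Λ(E i j) ⊗ₖ E i j`, a matrix indexed by `Fin m × Fin n`. -/
noncomputable def choi {n m : ℕ}
    (Λ : Matrix (Fin n) (Fin n) ℂ →ₗ[ℂ] Matrix (Fin m) (Fin m) ℂ) :
    Matrix (Fin m × Fin n) (Fin m × Fin n) ℂ :=
  ∑ i : Fin n, ∑ j : Fin n,
    (Λ (Matrix.single i j 1)) ⊗ₖ (Matrix.single i j 1)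

/-- `Λ ⊗ id_N` : the unique linear map with `(Λ ⊗ id_N)(A ⊗ₖ B) = Λ(A) ⊗ₖ B`,
written out explicitly. -/
noncomputable def tensorId {n m : ℕ}
    (Λ : Matrix (Fin n) (Fin n) ℂ →ₗ[ℂ] Matrix (Fin m) (Fin m) ℂ) (N : ℕ)
    (M : Matrix (Fin n × Fin N) (Fin n × Fin N) ℂ) :
    Matrix (Fin m × Fin N) (Fin m × Fin N) ℂ :=
  Matrix.of fun p q => Λ (Matrix.of fun i j => M (i, p.2) (j, q.2)) p.1 q.1

/-- `Λ` is `N`-positive: `Λ ⊗ id_N` maps PSD matrices to PSD matrices. -/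
def NPos {n m : ℕ}
    (Λ : Matrix (Fin n) (Fin n) ℂ →ₗ[ℂ] Matrix (Fin m) (Fin m) ℂ) (N : ℕ) : Prop :=
  ∀ M : Matrix (Fin n × Fin N) (Fin n × Fin N) ℂ,
    M.PosSemidef → (tensorId Λ N M).PosSemidef

/-- `Λ` is completely positive: `N`-positive for every `N ≥ 1`. -/
def CP {n m : ℕ}
    (Λ : Matrix (Fin n) (Fin n) ℂ →ₗ[ℂ] Matrix (Fin m) (Fin m) ℂ) : Prop :=
  ∀ N : ℕ, 1 ≤ N → NPos Λ N

namespace GKSL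
open Matrix Filter Finset

variable {n : ℕ}

lemma choi_apply (Λ : Matrix (Fin n) (Fin n) ℂ →ₗ[ℂ] Matrix (Fin n) (Fin n) ℂ)
    (p q : Fin n × Fin n) :
    choi Λ p q = Λ (Matrix.single p.2 q.2 1) p.1 q.1 := by
  obtain ⟨p1, p2⟩ := p
  obtain ⟨q1, q2⟩ := q
  simp [choi, Matrix.sum_apply, Matrix.single, Matrix.kroneckerMap_apply, ite_and,
    mul_ite, mul_one, mul_zero]

lemma map_eq_on_basis
    {L1 L2 : Matrix (Fin n) (Fin n) ℂ →ₗ[ℂ] Matrix (Fin n) (Fin n) ℂ}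
    (h : ∀ i j : Fin n, L1 (Matrix.single i j 1) = L2 (Matrix.single i j 1))
    (ρ : Matrix (Fin n) (Fin n) ℂ) : L1 ρ = L2 ρ := by
  have hρ : ρ = ∑ i : Fin n, ∑ j : Fin n, ρ i j • Matrix.single i j (1 : ℂ) := by
    conv_lhs => rw [Matrix.matrix_eq_sum_single ρ]
    simp
  rw [hρ]
  simp only [map_sum, LinearMap.map_smul, h]


/-- the "vec of identity" vector -/
def omg (n : ℕ) : Fin n × Fin n → ℂ := fun p => if p.1 = p.2 then 1 else 0

lemma star_omg : star (omg n) = omg n := by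
  funext p; by_cases h : p.1 = p.2 <;> simp [omg, h]

lemma dot_omg : dotProduct (star (omg n)) (omg n) = (n : ℂ) := by
  rw [star_omg]
  simp [dotProduct, omg, Fintype.sum_prod_type, ite_and, Finset.sum_ite_eq]

lemma herm_flip {m : Type*} [Fintype m] {M : Matrix m m ℂ} (hM : M.IsHermitian)
    (u v : m → ℂ) :
    dotProduct (star u) (M *ᵥ v) = star (dotProduct (star v) (M *ᵥ u)) := by
  simp only [dotProduct, mulVec, star_sum, star_mul', Pi.star_apply, star_star,
    Finset.mul_sum, Finset.sum_mul]
  rw [Finset.sum_comm]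
  refine Finset.sum_congr rfl fun p _ => Finset.sum_congr rfl fun q _ => ?_
  rw [← hM.apply p q]
  simp only [star_star]
  ring

lemma quad_real {m : Type*} [Fintype m] {M : Matrix m m ℂ} (hM : M.IsHermitian)
    (u : m → ℂ) : star (dotProduct (star u) (M *ᵥ u)) = dotProduct (star u) (M *ᵥ u) :=
  (herm_flip hM u u).symm


lemma psd_vecMulVec {m : Type*} [Fintype m] (v : m → ℂ) :
    (vecMulVec v (star v)).PosSemidef := by
  rw [posSemidef_iff_dotProduct_mulVec]
  constructor
  · ext p q
    simp only [conjTranspose_apply, vecMulVec_apply, Pi.star_apply, star_mul', star_star]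
    ring
  · intro x
    have key : dotProduct (star x) ((vecMulVec v (star v)) *ᵥ x)
        = star (dotProduct (star v) x) * (dotProduct (star v) x) := by
      simp only [dotProduct, mulVec, vecMulVec_apply, star_sum, star_mul', star_star,
        Pi.star_apply, Finset.mul_sum, Finset.sum_mul]
      rw [Finset.sum_comm]
      refine Finset.sum_congr rfl fun p _ => Finset.sum_congr rfl fun q _ => ?_
      ring
    rw [key]
    exact star_mul_self_nonneg _


lemma tensorId_omega (Λ : Matrix (Fin n) (Fin n) ℂ →ₗ[ℂ] Matrix (Fin n) (Fin n) ℂ) :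
    tensorId Λ n (vecMulVec (omg n) (star (omg n))) = choi Λ := by
  ext p q
  rw [choi_apply]
  show Λ (Matrix.of fun i j => (vecMulVec (omg n) (star (omg n))) (i, p.2) (j, q.2)) p.1 q.1 = _
  have hb : (Matrix.of fun i j => (vecMulVec (omg n) (star (omg n))) (i, p.2) (j, q.2))
      = Matrix.single p.2 q.2 (1 : ℂ) := by
    ext i j
    simp only [Matrix.of_apply, vecMulVec_apply, omg, Matrix.single, Pi.star_apply]
    by_cases h1 : i = p.2 <;> by_cases h2 : j = q.2 <;>
      simp [h1, h2, eq_comm, Ne.symm]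
  rw [hb]


lemma dot_flip {m : Type*} [Fintype m] (u v : m → ℂ) :
    star (dotProduct (star u) v) = dotProduct (star v) u := by
  simp only [dotProduct, star_sum, star_mul', star_star, Pi.star_apply]
  exact Finset.sum_congr rfl fun p _ => mul_comm _ _

lemma vecMulVec_mulVec' {m : Type*} [Fintype m] (a b x : m → ℂ) :
    (vecMulVec a b) *ᵥ x = (dotProduct b x) • a := by
  ext i
  simp only [mulVec, vecMulVec_apply, dotProduct, Pi.smul_apply, smul_eq_mul,
    Finset.sum_mul]
  exact Finset.sum_congr rfl fun p _ => by ring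

lemma conjTranspose_vecMulVec {m : Type*} [Fintype m] (a b : m → ℂ) :
    (vecMulVec a (star b))ᴴ = vecMulVec b (star a) := by
  ext i j
  simp only [conjTranspose_apply, vecMulVec_apply, Pi.star_apply, star_mul', star_star]
  ring

lemma key_decomp (hn : 0 < n) {C : Matrix (Fin n × Fin n) (Fin n × Fin n) ℂ}
    (hherm : C.IsHermitian)
    (hpos : ∀ x, dotProduct (star (omg n)) x = 0 → 0 ≤ dotProduct (star x) (C *ᵥ x)) :
    ∃ φ : Fin n × Fin n → ℂ,
      (C - (vecMulVec φ (star (omg n)) + vecMulVec (omg n) (star φ))).PosSemidef ∧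
      (C - (vecMulVec φ (star (omg n)) + vecMulVec (omg n) (star φ))) *ᵥ (omg n) = 0 ∧
      star (dotProduct (star (omg n)) φ) = dotProduct (star (omg n)) φ := by
  have hn' : (n : ℂ) ≠ 0 := Nat.cast_ne_zero.2 hn.ne'
  set ω := omg n with hω
  set g := C *ᵥ ω with hg
  set s := dotProduct (star ω) g with hs
  have hs_real : star s = s := quad_real hherm ω
  set φ : Fin n × Fin n → ℂ := (n : ℂ)⁻¹ • g - (s / (2 * (n : ℂ) ^ 2)) • ω with hφ
  set D := vecMulVec φ (star ω) + vecMulVec ω (star φ) with hD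
  -- ω ⬝ φ
  have hωφ : dotProduct (star ω) φ = s / (2 * (n : ℂ)) := by
    rw [hφ, dotProduct_sub, dotProduct_smul, dotProduct_smul, dot_omg, ← hs]
    simp only [smul_eq_mul]
    field_simp
    ring
  have hωφ_real : star (dotProduct (star ω) φ) = dotProduct (star ω) φ := by
    rw [hωφ]
    rw [star_div₀, hs_real]
    norm_num
  have hφω : dotProduct (star φ) ω = s / (2 * (n : ℂ)) := by
    rw [← dot_flip ω φ, hωφ_real, hωφ]
  -- D is Hermitian
  have hDherm : D.IsHermitian := by
    have h1 : (vecMulVec φ (star ω))ᴴ = vecMulVec ω (star φ) := conjTranspose_vecMulVec φ ω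
    have h2 : (vecMulVec ω (star φ))ᴴ = vecMulVec φ (star ω) := conjTranspose_vecMulVec ω φ
    show Dᴴ = D
    rw [hD, conjTranspose_add, h1, h2, add_comm]
  have hMherm : (C - D).IsHermitian := hherm.sub hDherm
  -- (C - D) *ᵥ ω = 0
  have hMω : (C - D) *ᵥ ω = 0 := by
    rw [sub_mulVec, hD, add_mulVec, vecMulVec_mulVec', vecMulVec_mulVec', dot_omg, hφω]
    rw [hφ]
    rw [smul_sub, smul_smul, smul_smul]
    have e1 : (n : ℂ) * (n : ℂ)⁻¹ = 1 := mul_inv_cancel₀ hn'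
    have e2 : (n : ℂ) * (s / (2 * (n : ℂ) ^ 2)) = s / (2 * (n : ℂ)) := by
      field_simp
    rw [e1, e2, one_smul, ← hg]
    ext p
    simp only [Pi.sub_apply, Pi.add_apply, Pi.smul_apply, smul_eq_mul, Pi.zero_apply]
    ring
  refine ⟨φ, posSemidef_iff_dotProduct_mulVec.mpr ⟨hMherm, ?_⟩, hMω, hωφ_real⟩
  intro x
  set c := dotProduct (star ω) x / (n : ℂ) with hc
  set y := x - c • ω with hy
  have hyω : dotProduct (star ω) y = 0 := by
    rw [hy, dotProduct_sub, dotProduct_smul, dot_omg, hc]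
    simp only [smul_eq_mul]
    field_simp
    ring
  have hx : x = y + c • ω := by rw [hy]; abel
  have hMvx : (C - D) *ᵥ x = (C - D) *ᵥ y := by
    rw [hx, mulVec_add, mulVec_smul, hMω, smul_zero, add_zero]
  have hcross : dotProduct (star ω) ((C - D) *ᵥ y) = 0 := by
    rw [herm_flip hMherm ω y, hMω, dotProduct_zero, star_zero]
  have hquad : dotProduct (star x) ((C - D) *ᵥ x) = dotProduct (star y) ((C - D) *ᵥ y) := by
    rw [hMvx, hx, star_add, add_dotProduct, star_smul, smul_dotProduct, hcross,
      smul_zero, add_zero]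
  rw [hquad]
  -- star y ⬝ᵥ (C - D) *ᵥ y = star y ⬝ᵥ C *ᵥ y
  have hDy : D *ᵥ y = (dotProduct (star φ) y) • ω := by
    rw [hD, add_mulVec, vecMulVec_mulVec', vecMulVec_mulVec', hyω, zero_smul, zero_add]
  have hyDy : dotProduct (star y) (D *ᵥ y) = 0 := by
    rw [hDy, dotProduct_smul]
    have : dotProduct (star y) ω = 0 := by
      rw [← dot_flip ω y, hyω, star_zero]
    rw [this, smul_zero]
  rw [sub_mulVec, dotProduct_sub, hyDy, sub_zero]
  exact hpos y hyω


lemma dot_conjTranspose_mulVec {m : Type*} [Fintype m] (A : Matrix m m ℂ) (x u : m → ℂ) :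
    dotProduct (star x) (Aᴴ *ᵥ u) = dotProduct (star (A *ᵥ x)) u := by
  simp only [dotProduct, mulVec, conjTranspose_apply, Pi.star_apply, star_sum, star_mul',
    star_star, Finset.mul_sum, Finset.sum_mul]
  rw [Finset.sum_comm]
  refine Finset.sum_congr rfl fun p _ => Finset.sum_congr rfl fun k _ => by ring

lemma kraus {Mψ : Matrix (Fin n × Fin n) (Fin n × Fin n) ℂ} (hpsd : Mψ.PosSemidef)
    (hker : Mψ *ᵥ (omg n) = 0) :
    ∃ A : (Fin n × Fin n) → Matrix (Fin n) (Fin n) ℂ,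
      (∀ p q : Fin n × Fin n,
        Mψ p q = ∑ k : Fin n × Fin n, A k p.1 p.2 * star (A k q.1 q.2)) ∧
      ∀ k, (A k).trace = 0 := by
  obtain ⟨B, hB⟩ : ∃ B : Matrix (Fin n × Fin n) (Fin n × Fin n) ℂ, Mψ = Bᴴ * B := by
    open scoped MatrixOrder in
    obtain ⟨X, hX, -, hXX⟩ :=
      CFC.exists_sqrt_of_isSelfAdjoint_of_quasispectrumRestricts hpsd.isHermitian
        (QuasispectrumRestricts.nnreal_of_nonneg hpsd.nonneg)
    exact ⟨X, by rw [← hXX, show Xᴴ = X from hX]⟩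
  have hBω : B *ᵥ (omg n) = 0 := by
    have h0 : dotProduct (star (omg n)) (Mψ *ᵥ omg n) = 0 := by
      rw [hker, dotProduct_zero]
    rw [hB, ← mulVec_mulVec, dot_conjTranspose_mulVec] at h0
    exact dotProduct_star_self_eq_zero.mp h0
  refine ⟨fun k => Matrix.of fun a c => star (B k (a, c)), fun p q => ?_, fun k => ?_⟩
  · rw [hB]
    simp only [Matrix.mul_apply, conjTranspose_apply, Matrix.of_apply, star_star]
  · have h1 : ∑ a : Fin n, B k (a, a) = 0 := by
      have := congrFun hBω k
      simpa [mulVec, dotProduct, omg, Fintype.sum_prod_type, mul_ite, mul_one, mul_zero,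
        Finset.sum_ite_eq] using this
    simp only [Matrix.trace, Matrix.diag, Matrix.of_apply, ← star_sum, h1, star_zero]


noncomputable def krausMap {κ : Type*} [Fintype κ] (A : κ → Matrix (Fin n) (Fin n) ℂ) :
    Matrix (Fin n) (Fin n) ℂ →ₗ[ℂ] Matrix (Fin n) (Fin n) ℂ where
  toFun X := ∑ k, A k * X * (A k)ᴴ
  map_add' X Y := by
    simp [Matrix.mul_add, Matrix.add_mul, Finset.sum_add_distrib]
  map_smul' c X := by
    simp [Matrix.mul_smul, Matrix.smul_mul, Finset.smul_sum]

lemma krausMap_apply {κ : Type*} [Fintype κ] (A : κ → Matrix (Fin n) (Fin n) ℂ)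
    (X : Matrix (Fin n) (Fin n) ℂ) : krausMap A X = ∑ k, A k * X * (A k)ᴴ := rfl

lemma psd_sum {ι : Type*} {m : Type*} [Fintype m] (s : Finset ι)
    (f : ι → Matrix m m ℂ) (h : ∀ i ∈ s, (f i).PosSemidef) :
    (∑ i ∈ s, f i).PosSemidef :=
  Finset.sum_induction f _ (fun _ _ ha hb => ha.add hb) Matrix.PosSemidef.zero h

lemma tensorId_krausMap {κ : Type*} [Fintype κ] (A : κ → Matrix (Fin n) (Fin n) ℂ)
    (N : ℕ) (M : Matrix (Fin n × Fin N) (Fin n × Fin N) ℂ) :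
    tensorId (krausMap A) N M
      = ∑ k, (A k ⊗ₖ (1 : Matrix (Fin N) (Fin N) ℂ)) * M * ((A k ⊗ₖ 1)ᴴ) := by
  ext p q
  show (∑ k, A k * (Matrix.of fun i j => M (i, p.2) (j, q.2)) * (A k)ᴴ) p.1 q.1 = _
  rw [Matrix.sum_apply, Matrix.sum_apply]
  refine Finset.sum_congr rfl fun k _ => ?_
  simp only [Matrix.mul_apply, conjTranspose_apply, Matrix.of_apply,
    Matrix.kroneckerMap_apply, Matrix.one_apply, Fintype.sum_prod_type,
    mul_ite, mul_one, mul_zero, ite_mul, one_mul, zero_mul, star_mul', star_one,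
    apply_ite (star : ℂ → ℂ),
    star_zero, Finset.sum_ite_irrel, Finset.sum_ite_eq, Finset.sum_ite_eq',
    Finset.mem_univ, if_true, Finset.sum_mul, Finset.mul_sum]

lemma cp_krausMap {κ : Type*} [Fintype κ] (A : κ → Matrix (Fin n) (Fin n) ℂ) :
    CP (krausMap A) := by
  intro N _ M hM
  rw [tensorId_krausMap]
  exact psd_sum _ _ fun k _ => hM.mul_mul_conjTranspose_same _

lemma choi_krausMap {κ : Type*} [Fintype κ] (A : κ → Matrix (Fin n) (Fin n) ℂ)
    (p q : Fin n × Fin n) :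
    choi (krausMap A) p q = ∑ k, A k p.1 p.2 * star (A k q.1 q.2) := by
  rw [choi_apply, krausMap_apply, Matrix.sum_apply]
  refine Finset.sum_congr rfl fun k _ => ?_
  simp [Matrix.mul_apply, Matrix.single, conjTranspose_apply, ite_and,
    mul_ite, mul_one, mul_zero, ite_mul, zero_mul, Finset.sum_ite_eq, Finset.sum_ite_eq']


lemma choi_id :
    choi (LinearMap.id : Matrix (Fin n) (Fin n) ℂ →ₗ[ℂ] Matrix (Fin n) (Fin n) ℂ)
      = vecMulVec (omg n) (star (omg n)) := by
  ext p q
  rw [choi_apply]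
  simp only [LinearMap.id_coe, id_eq, Matrix.single, Matrix.of_apply,
    vecMulVec_apply, omg, Pi.star_apply]
  by_cases h1 : p.1 = p.2 <;> by_cases h2 : q.1 = q.2 <;>
    simp [h1, h2, eq_comm]

lemma tendsto_entry {ι : Type*} [Fintype ι] {X : Type*} {l : Filter X}
    {f : X → Matrix ι ι ℂ} {M : Matrix ι ι ℂ}
    (h : Filter.Tendsto f l (nhds M)) (i j : ι) :
    Filter.Tendsto (fun x => f x i j) l (nhds (M i j)) :=
  ((Continuous.matrix_elem continuous_id i j).tendsto M).comp h

end GKSL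

/-- GKSL necessity, finite dimensions: if `Λ(t)` is a family of completely
positive maps with `Λ(0) = id` whose right derivative `ℒ` at `t = 0` exists, then
`ℒ = L(Ψ,G,H)` for some completely positive `Ψ` and Hermitian `G`, `H`; moreover `Ψ`, `G`,
`H` can be chosen so that `tr H = 0` and `Ψ` has a Kraus presentation with traceless
Kraus operators. -/
theorem gksl_necessity {n : ℕ}
    (Λ : ℝ → (Matrix (Fin n) (Fin n) ℂ →ₗ[ℂ] Matrix (Fin n) (Fin n) ℂ))
    (hCP : ∀ t : ℝ, 0 ≤ t → CP (Λ t))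
    (h0 : Λ 0 = LinearMap.id)
    (ℒ : Matrix (Fin n) (Fin n) ℂ →ₗ[ℂ] Matrix (Fin n) (Fin n) ℂ)
    (hderiv : ∀ ρ : Matrix (Fin n) (Fin n) ℂ,
      Filter.Tendsto (fun t : ℝ => (t : ℂ)⁻¹ • (Λ t ρ - ρ))
        (nhdsWithin 0 (Set.Ioi 0)) (nhds (ℒ ρ))) :
    ∃ (Ψ : Matrix (Fin n) (Fin n) ℂ →ₗ[ℂ] Matrix (Fin n) (Fin n) ℂ)
      (G H : Matrix (Fin n) (Fin n) ℂ),
      CP Ψ ∧ G.IsHermitian ∧ H.IsHermitian ∧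
      (∀ ρ : Matrix (Fin n) (Fin n) ℂ,
        ℒ ρ = Ψ ρ - (G * ρ + ρ * G) - Complex.I • (H * ρ - ρ * H)) ∧
      H.trace = 0 ∧
      ∃ A : Fin (n * n) → Matrix (Fin n) (Fin n) ℂ,
        (∀ X : Matrix (Fin n) (Fin n) ℂ, Ψ X = ∑ k : Fin (n * n), A k * X * (A k)ᴴ) ∧
        ∀ k : Fin (n * n), (A k).trace = 0 := by
  classical
  rcases Nat.eq_zero_or_pos n with hn | hn
  · subst hn
    refine ⟨0, 0, 0, ?_, Matrix.isHermitian_zero, Matrix.isHermitian_zero, ?_, ?_,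
      fun _ => 0, ?_, ?_⟩
    · intro N _ M _
      have h : tensorId (0 : Matrix (Fin 0) (Fin 0) ℂ →ₗ[ℂ] Matrix (Fin 0) (Fin 0) ℂ) N M
          = 0 := by
        ext ⟨i, _⟩ _
        exact i.elim0
      rw [h]
      exact Matrix.PosSemidef.zero
    · intro ρ
      have hρ : ρ = 0 := by
        ext i j
        exact i.elim0
      rw [hρ]
      simp
    · simp
    · intro X
      simp
    · intro k
      simp
  · -- main case
    have hn1 : 1 ≤ n := hn
    have hΩpsd := GKSL.psd_vecMulVec (GKSL.omg n)
    have hchoit : ∀ t : ℝ, 0 ≤ t → (choi (Λ t)).PosSemidef := by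
      intro t ht
      rw [← GKSL.tensorId_omega (Λ t)]
      exact hCP t ht n hn1 _ hΩpsd
    have hchoi0 : choi (Λ 0) = Matrix.vecMulVec (GKSL.omg n) (star (GKSL.omg n)) := by
      rw [h0]
      exact GKSL.choi_id
    set C := choi ℒ with hC
    set Ω := Matrix.vecMulVec (GKSL.omg n) (star (GKSL.omg n)) with hΩ
    -- entrywise limits
    have hlim : ∀ p q : Fin n × Fin n,
        Filter.Tendsto (fun t : ℝ => (t : ℂ)⁻¹ * (choi (Λ t) p q - Ω p q))
          (nhdsWithin 0 (Set.Ioi 0)) (nhds (C p q)) := by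
      intro p q
      have h1 := GKSL.tendsto_entry (hderiv (Matrix.single p.2 q.2 1)) p.1 q.1
      have hpt : C p q = ℒ (Matrix.single p.2 q.2 1) p.1 q.1 := GKSL.choi_apply ℒ p q
      rw [hpt]
      refine h1.congr fun t => ?_
      rw [Matrix.smul_apply, Matrix.sub_apply, smul_eq_mul, ← GKSL.choi_apply (Λ t) p q,
        ← hchoi0, GKSL.choi_apply (Λ 0) p q, h0]
      rfl
    -- C is Hermitian
    have hCherm : C.IsHermitian := by
      refine Matrix.ext fun p q => ?_
      rw [Matrix.conjTranspose_apply]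
      have h1 := hlim p q
      have h2 := (continuous_star.tendsto _).comp (hlim q p)
      have heq : (fun t : ℝ => star ((t : ℂ)⁻¹ * (choi (Λ t) q p - Ω q p)))
          =ᶠ[nhdsWithin (0:ℝ) (Set.Ioi 0)]
          (fun t : ℝ => (t : ℂ)⁻¹ * (choi (Λ t) p q - Ω p q)) := by
        filter_upwards [self_mem_nhdsWithin] with t ht
        have ht' : (0:ℝ) ≤ t := le_of_lt ht
        have hstar_t : star ((t : ℂ)⁻¹) = (t : ℂ)⁻¹ := by
          rw [star_inv₀, Complex.star_def, Complex.conj_ofReal]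
        rw [star_mul', star_sub, hstar_t, (hchoit t ht').1.apply p q, hΩpsd.1.apply p q,
          mul_comm]
      exact tendsto_nhds_unique (h2.congr' heq) h1
    -- C is positive on the orthogonal complement of omg
    have hq : ∀ (M : Matrix (Fin n × Fin n) (Fin n × Fin n) ℂ) (x : Fin n × Fin n → ℂ),
        dotProduct (star x) (M *ᵥ x)
          = ∑ p : Fin n × Fin n, ∑ q : Fin n × Fin n, star (x p) * M p q * x q := by
      intro M x
      simp only [dotProduct, Matrix.mulVec, Pi.star_apply, Finset.mul_sum,
        Finset.sum_mul]
      refine Finset.sum_congr rfl fun p _ => Finset.sum_congr rfl fun q _ => by ring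
    have hcpos : ∀ x, dotProduct (star (GKSL.omg n)) x = 0 →
        0 ≤ dotProduct (star x) (C *ᵥ x) := by
      intro x hx
      have hΩx : dotProduct (star x) (Ω *ᵥ x) = 0 := by
        rw [hΩ, GKSL.vecMulVec_mulVec', hx, zero_smul, dotProduct_zero]
      have hlim2 : Filter.Tendsto
          (fun t : ℝ => ∑ p : Fin n × Fin n, ∑ q : Fin n × Fin n,
            star (x p) * ((t : ℂ)⁻¹ * (choi (Λ t) p q - Ω p q)) * x q)
          (nhdsWithin (0:ℝ) (Set.Ioi 0))
          (nhds (∑ p : Fin n × Fin n, ∑ q : Fin n × Fin n, star (x p) * C p q * x q)) := by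
        refine tendsto_finset_sum _ fun p _ => tendsto_finset_sum _ fun q _ => ?_
        exact ((hlim p q).const_mul _).mul_const _
      have hval : ∀ t : ℝ, 0 < t →
          (∑ p : Fin n × Fin n, ∑ q : Fin n × Fin n,
            star (x p) * ((t : ℂ)⁻¹ * (choi (Λ t) p q - Ω p q)) * x q)
          = (t : ℂ)⁻¹ * dotProduct (star x) ((choi (Λ t)) *ᵥ x) := by
        intro t ht
        have e1 : (∑ p : Fin n × Fin n, ∑ q : Fin n × Fin n,
            star (x p) * ((t : ℂ)⁻¹ * (choi (Λ t) p q - Ω p q)) * x q)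
            = (t : ℂ)⁻¹ * (dotProduct (star x) ((choi (Λ t)) *ᵥ x)
                - dotProduct (star x) (Ω *ᵥ x)) := by
          rw [hq (choi (Λ t)) x, hq Ω x, ← Finset.sum_sub_distrib, Finset.mul_sum]
          refine Finset.sum_congr rfl fun p _ => ?_
          rw [← Finset.sum_sub_distrib, Finset.mul_sum]
          refine Finset.sum_congr rfl fun q _ => by ring
        rw [e1, hΩx, sub_zero]
      have him : ∀ᶠ (t : ℝ) in nhdsWithin (0:ℝ) (Set.Ioi 0),
          0 ≤ (∑ p : Fin n × Fin n, ∑ q : Fin n × Fin n,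
            star (x p) * ((t : ℂ)⁻¹ * (choi (Λ t) p q - Ω p q)) * x q) := by
        filter_upwards [self_mem_nhdsWithin] with t ht
        rw [hval t ht]
        have h1 : (0:ℂ) ≤ (t : ℂ)⁻¹ := by
          rw [← Complex.ofReal_inv]
          rw [Complex.le_def]
          constructor
          · simp [le_of_lt (inv_pos.2 (Set.mem_Ioi.mp ht))]
          · simp
        have h2 : (0:ℂ) ≤ dotProduct (star x) ((choi (Λ t)) *ᵥ x) :=
          (hchoit t (le_of_lt ht)).dotProduct_mulVec_nonneg x
        exact mul_nonneg h1 h2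
      have hre : 0 ≤ (∑ p : Fin n × Fin n, ∑ q : Fin n × Fin n,
          star (x p) * C p q * x q).re := by
        refine ge_of_tendsto ((Complex.continuous_re.tendsto _).comp hlim2) ?_
        filter_upwards [him] with t ht
        exact (Complex.le_def.mp ht).1
      have him0 : (∑ p : Fin n × Fin n, ∑ q : Fin n × Fin n,
          star (x p) * C p q * x q).im = 0 := by
        have ha := (Complex.continuous_im.tendsto _).comp hlim2
        have hb : (fun t : ℝ => ((∑ p : Fin n × Fin n, ∑ q : Fin n × Fin n,
            star (x p) * ((t : ℂ)⁻¹ * (choi (Λ t) p q - Ω p q)) * x q)).im)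
            =ᶠ[nhdsWithin (0:ℝ) (Set.Ioi 0)] (fun _ => (0:ℝ)) := by
          filter_upwards [him] with t ht
          exact ((Complex.le_def.mp ht).2).symm
        exact (tendsto_nhds_unique (ha.congr' hb) tendsto_const_nhds)
      rw [hq C x, Complex.le_def]
      exact ⟨by simpa using hre, by rw [Complex.zero_im, him0]⟩
    obtain ⟨φ, hpsd, hker, hreal⟩ := GKSL.key_decomp hn hCherm hcpos
    obtain ⟨A', hA'entry, hA'trace⟩ := GKSL.kraus hpsd hker
    set K : Matrix (Fin n) (Fin n) ℂ := Matrix.of fun a c => φ (a, c) with hK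
    set Ψ := GKSL.krausMap A' with hΨ
    set G : Matrix (Fin n) (Fin n) ℂ := (-(1:ℂ)/2) • (K + Kᴴ) with hG
    set H : Matrix (Fin n) (Fin n) ℂ := (Complex.I/2) • (K - Kᴴ) with hHdef
    have hGherm : G.IsHermitian := by
      show Gᴴ = G
      rw [hG, Matrix.conjTranspose_smul, Matrix.conjTranspose_add,
        Matrix.conjTranspose_conjTranspose, add_comm Kᴴ K]
      congr 1
      simp [Complex.star_def]
    have hHherm : H.IsHermitian := by
      show Hᴴ = H
      rw [hHdef, Matrix.conjTranspose_smul, Matrix.conjTranspose_sub,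
        Matrix.conjTranspose_conjTranspose]
      have h1 : star (Complex.I / 2) = -(Complex.I / 2) := by
        simp [Complex.star_def, Complex.conj_I, neg_div]
      rw [h1, neg_smul, ← smul_neg, neg_sub]
    -- basis identity
    have hbasis : ∀ i j : Fin n, ℒ (Matrix.single i j 1)
        = Ψ (Matrix.single i j 1)
          + (K * Matrix.single i j 1 + Matrix.single i j 1 * Kᴴ) := by
      intro i j
      ext a b
      have h1 : ℒ (Matrix.single i j 1) a b = C ((a, i)) ((b, j)) :=
        (GKSL.choi_apply ℒ (a, i) (b, j)).symm
      have h2 : Ψ (Matrix.single i j 1) a b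
          = (C - (Matrix.vecMulVec φ (star (GKSL.omg n))
              + Matrix.vecMulVec (GKSL.omg n) (star φ))) ((a, i)) ((b, j)) := by
        rw [hΨ, ← GKSL.choi_apply (GKSL.krausMap A') (a, i) (b, j),
          GKSL.choi_krausMap A' (a, i) (b, j), ← hA'entry (a, i) (b, j)]
      have h3 : (K * Matrix.single i j (1:ℂ)) a b
            + (Matrix.single i j (1:ℂ) * Kᴴ) a b
          = (Matrix.vecMulVec φ (star (GKSL.omg n))
              + Matrix.vecMulVec (GKSL.omg n) (star φ)) ((a, i)) ((b, j)) := by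
        simp only [Matrix.add_apply, Matrix.mul_apply, Matrix.vecMulVec_apply,
          Pi.star_apply, GKSL.omg, hK, Matrix.of_apply, Matrix.conjTranspose_apply,
          Matrix.single, ite_and, mul_ite, mul_one, mul_zero, ite_mul, zero_mul,
          one_mul, Finset.sum_ite_eq, Finset.sum_ite_eq', Finset.mem_univ, if_true]
        by_cases hia : i = a <;> by_cases hjb : j = b <;> simp [hia, hjb, eq_comm]
      simp only [Matrix.add_apply]
      rw [h1, h2, h3, Matrix.sub_apply]
      ring
    set L2 := Ψ + (LinearMap.mulLeft ℂ K + LinearMap.mulRight ℂ Kᴴ) with hL2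
    have hmain : ∀ ρ : Matrix (Fin n) (Fin n) ℂ, ℒ ρ = Ψ ρ + (K * ρ + ρ * Kᴴ) := by
      intro ρ
      have hb2 : ∀ i j : Fin n, ℒ (Matrix.single i j 1)
          = L2 (Matrix.single i j 1) := by
        intro i j
        rw [hL2]
        simp only [LinearMap.add_apply, LinearMap.mulLeft_apply, LinearMap.mulRight_apply]
        rw [hbasis i j]
      have := GKSL.map_eq_on_basis hb2 ρ
      rw [this, hL2]
      simp only [LinearMap.add_apply, LinearMap.mulLeft_apply, LinearMap.mulRight_apply]
    have hI : Complex.I * (Complex.I / 2) = -(1:ℂ)/2 := by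
      rw [← mul_div_assoc, Complex.I_mul_I]
    have heq : ∀ ρ : Matrix (Fin n) (Fin n) ℂ,
        ℒ ρ = Ψ ρ - (G * ρ + ρ * G) - Complex.I • (H * ρ - ρ * H) := by
      intro ρ
      rw [hmain ρ]
      have hHρ : Complex.I • (H * ρ - ρ * H)
          = (-(1:ℂ)/2) • ((K - Kᴴ) * ρ - ρ * (K - Kᴴ)) := by
        rw [hHdef, Matrix.smul_mul, Matrix.mul_smul, ← smul_sub, smul_smul, hI]
      have hGρ : G * ρ + ρ * G = (-(1:ℂ)/2) • ((K + Kᴴ) * ρ + ρ * (K + Kᴴ)) := by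
        rw [hG, Matrix.smul_mul, Matrix.mul_smul, smul_add]
      rw [hGρ, hHρ, Matrix.add_mul, Matrix.mul_add, Matrix.sub_mul, Matrix.mul_sub]
      module
    have htrK : K.trace = dotProduct (star (GKSL.omg n)) φ := by
      rw [GKSL.star_omg]
      simp [Matrix.trace, Matrix.diag, hK, dotProduct, GKSL.omg,
        Fintype.sum_prod_type, ite_mul, one_mul, zero_mul, Finset.sum_ite_eq]
    have htrH : H.trace = 0 := by
      rw [hHdef, Matrix.trace_smul, Matrix.trace_sub, Matrix.trace_conjTranspose,
        htrK, hreal, sub_self, smul_zero]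
    refine ⟨Ψ, G, H, ?_, hGherm, hHherm, heq, htrH,
      fun k => A' (finProdFinEquiv.symm k), ?_, fun k => hA'trace _⟩
    · rw [hΨ]
      exact GKSL.cp_krausMap A'
    · intro X
      rw [hΨ, GKSL.krausMap_apply]
      exact (Equiv.sum_comp (finProdFinEquiv.symm)
        (fun p => A' p * X * (A' p)ᴴ)).symm
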